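/- Explicit integral formula for the dynamic relay on intervals where the input stays above the upper threshold (eq. (2.15), first case): Let y be a dynamic relay solution for (u, ξ), and let [a,b] ⊆ [0,T] be such that u(s) ≥ ρ₂ for a.e. s ∈ [a,b]. Then for every t ∈ [a,b], y(t) = min{ 1, y(a) + ∫_a^t k·(u(s) − ρ₂) ds }. -/

import Mathlib

open MeasureTheory Set

/-- The function `g(u) = k·(u − ρ₂)⁺ − k·(ρ₁ − u)⁺` driving the dynamic relay. -/
noncomputable def relayG (ρ₁ ρ₂ k u : ℝ) : ℝ :=
  k * max (u - ρ₂) 0 - k * max (ρ₁ - u) 0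

/-- `y` (with a.e. derivative `y'`) is a dynamic relay solution on `[0,T]` for input `u`
and initial state `ξ`: `y ∈ H¹(0,T)` (encoded by `y' ∈ L²(0,T)` together with the
fundamental-theorem-of-calculus representation), `y(0) = ξ`, `|y| ≤ 1` on `[0,T]`, and
`q(t) := g(u(t)) − y'(t)` satisfies `q(t)(z − y(t)) ≤ 0` for all `z ∈ [−1,1]`, a.e. `t`. -/
def IsDynRelay (T ρ₁ ρ₂ k : ℝ) (u : ℝ → ℝ) (ξ : ℝ) (y y' : ℝ → ℝ) : Prop :=
  MemLp y' 2 (volume.restrict (Ioc (0:ℝ) T)) ∧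
  y 0 = ξ ∧
  (∀ t ∈ Icc (0:ℝ) T, y t = ξ + ∫ s in (0:ℝ)..t, y' s) ∧
  (∀ t ∈ Icc (0:ℝ) T, |y t| ≤ 1) ∧
  (∀ᵐ t ∂(volume.restrict (Ioo (0:ℝ) T)),
    ∀ z ∈ Icc (-1:ℝ) 1, (relayG ρ₁ ρ₂ k (u t) - y' t) * (z - y t) ≤ 0)

/-- Explicit integral formula for the dynamic relay on intervals where the input stays
above the upper threshold (eq. (2.15), first case). -/
theorem dyn_relay_formula_above (T ρ₁ ρ₂ k : ℝ)
    (hT : 0 < T) (hρ : ρ₁ < ρ₂) (hk : 0 < k)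
    (u : ℝ → ℝ) (hu : MemLp u 2 (volume.restrict (Ioc (0:ℝ) T)))
    (ξ : ℝ) (hξ : ξ ∈ Icc (-1:ℝ) 1)
    (y y' : ℝ → ℝ) (hy : IsDynRelay T ρ₁ ρ₂ k u ξ y y')
    (a b : ℝ) (ha : 0 ≤ a) (hab : a ≤ b) (hb : b ≤ T)
    (hub : ∀ᵐ s ∂(volume.restrict (Icc a b)), ρ₂ ≤ u s) :
    ∀ t ∈ Icc a b, y t = min 1 (y a + ∫ s in a..t, k * (u s - ρ₂)) := by
  obtain ⟨hy'L2, hy0, hyrep, hybd, hVI⟩ := hy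
  have hfin : volume (Ioc (0:ℝ) T) < ⊤ := measure_Ioc_lt_top
  haveI : IsFiniteMeasure (volume.restrict (Ioc (0:ℝ) T)) :=
    ⟨by rwa [Measure.restrict_apply_univ]⟩
  have hy'int : IntegrableOn y' (Ioc 0 T) := hy'L2.integrable one_le_two
  have huint : IntegrableOn u (Ioc 0 T) := hu.integrable one_le_two
  set f : ℝ → ℝ := fun s => k * (u s - ρ₂) with hfdef
  have hfint : IntegrableOn f (Ioc 0 T) := by
    have : IntegrableOn (fun s => u s - ρ₂) (Ioc 0 T) := huint.sub (integrableOn_const hfin.ne)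
    exact this.const_mul k
  -- interval integrability helper
  have hII : ∀ g : ℝ → ℝ, IntegrableOn g (Ioc 0 T) → ∀ s t : ℝ, 0 ≤ s → s ≤ t → t ≤ T →
      IntervalIntegrable g volume s t := by
    intro g hg s t hs hst ht
    rw [intervalIntegrable_iff_integrableOn_Ioc_of_le hst]
    exact hg.mono_set (Ioc_subset_Ioc hs ht)
  -- FTC helper
  have hyFTC : ∀ s t : ℝ, 0 ≤ s → s ≤ t → t ≤ T → y t - y s = ∫ x in s..t, y' x := by
    intro s t hs hst ht
    rw [hyrep t ⟨le_trans hs hst, ht⟩, hyrep s ⟨hs, le_trans hst ht⟩]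
    have h1 := hII y' hy'int 0 t le_rfl (le_trans hs hst) ht
    have h2 := hII y' hy'int 0 s le_rfl hs (le_trans hst ht)
    have := intervalIntegral.integral_interval_sub_left h1 h2
    linarith [this]
  set F : ℝ → ℝ := fun s => y a + ∫ x in a..s, f x with hFdef
  have hFd : ∀ s t : ℝ, a ≤ s → s ≤ t → t ≤ b → F t - F s = ∫ x in s..t, f x := by
    intro s t hs hst ht
    have h1 := hII f hfint a t ha (le_trans hs hst) (le_trans ht hb)
    have h2 := hII f hfint a s ha hs (le_trans (le_trans hst ht) hb)
    have := intervalIntegral.integral_interval_sub_left h1 h2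
    simp only [hFdef]
    linarith [this]
  -- a.e. nonnegativity of f on subintervals of [a,b]
  have hfae : ∀ s t : ℝ, a ≤ s → t ≤ b → (0:ℝ → ℝ) ≤ᵐ[volume.restrict (Icc s t)] f := by
    intro s t hs ht
    have hsub : Icc s t ⊆ Icc a b := Icc_subset_Icc hs ht
    have := ae_mono (Measure.restrict_mono hsub le_rfl) hub
    filter_upwards [this] with x hx
    have : (0:ℝ) ≤ u x - ρ₂ := by linarith
    exact mul_nonneg hk.le this
  have hFmono : ∀ s t : ℝ, a ≤ s → s ≤ t → t ≤ b → F s ≤ F t := by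
    intro s t hs hst ht
    have h := intervalIntegral.integral_nonneg_of_ae_restrict hst (hfae s t hs ht)
    have := hFd s t hs hst ht
    linarith
  have hFa : F a = y a := by simp [hFdef]
  have hya : |y a| ≤ 1 := hybd a ⟨ha, le_trans hab hb⟩
  -- continuity of y on [0,T]
  have hycont : ContinuousOn y (Icc 0 T) := by
    have hint : IntegrableOn y' (uIcc 0 T) := by
      rw [uIcc_of_le hT.le, integrableOn_Icc_iff_integrableOn_Ioc]
      exact hy'int
    have h := intervalIntegral.continuousOn_primitive_interval hint
    rw [uIcc_of_le hT.le] at h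
    exact (continuousOn_const.add h).congr fun t htm => hyrep t htm
  have hFcont : ContinuousOn F (Icc a b) := by
    have hint : IntegrableOn f (uIcc a b) := by
      rw [uIcc_of_le hab, integrableOn_Icc_iff_integrableOn_Ioc]
      exact hfint.mono_set (Ioc_subset_Ioc ha hb)
    have h := intervalIntegral.continuousOn_primitive_interval hint
    rw [uIcc_of_le hab] at h
    exact continuousOn_const.add h
  -- main
  intro t ht
  have h0t : (0:ℝ) ≤ t := le_trans ha ht.1
  have htT : t ≤ T := le_trans ht.2 hb
  have hyt1 : y t ≤ 1 := (abs_le.1 (hybd t ⟨h0t, htT⟩)).2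
  have hya1 : -1 ≤ y a := (abs_le.1 hya).1
  have hIccsub : Icc a t ⊆ Icc 0 T := Icc_subset_Icc ha htT
  have hIccsub' : Icc a t ⊆ Icc a b := Icc_subset_Icc le_rfl ht.2
  -- the a.e. facts on subintervals (Ioo s₀ t)
  have hae_all : ∀ s₀ : ℝ, a ≤ s₀ → s₀ ≤ t →
      (∀ᵐ s ∂(volume.restrict (Icc s₀ t)),
        ρ₂ ≤ u s ∧ (∀ z ∈ Icc (-1:ℝ) 1, (relayG ρ₁ ρ₂ k (u s) - y' s) * (z - y s) ≤ 0) ∧ s ∈ Ioo s₀ t) := by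
    intro s₀ hs₀a hs₀t
    have hres : volume.restrict (Icc s₀ t) = volume.restrict (Ioo s₀ t) :=
      (Measure.restrict_congr_set Ioo_ae_eq_Icc).symm
    rw [hres]
    have h1 : ∀ᵐ s ∂(volume.restrict (Ioo s₀ t)), ρ₂ ≤ u s := by
      have hsub : Ioo s₀ t ⊆ Icc a b := fun x hx => ⟨le_trans hs₀a hx.1.le, le_trans hx.2.le ht.2⟩
      exact ae_mono (Measure.restrict_mono hsub le_rfl) hub
    have h2 : ∀ᵐ s ∂(volume.restrict (Ioo s₀ t)),
        ∀ z ∈ Icc (-1:ℝ) 1, (relayG ρ₁ ρ₂ k (u s) - y' s) * (z - y s) ≤ 0 := by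
      have hsub : Ioo s₀ t ⊆ Ioo 0 T := fun x hx =>
        ⟨lt_of_le_of_lt (le_trans ha hs₀a) hx.1, lt_of_lt_of_le hx.2 htT⟩
      exact ae_mono (Measure.restrict_mono hsub le_rfl) hVI
    have h3 : ∀ᵐ s ∂(volume.restrict (Ioo s₀ t)), s ∈ Ioo s₀ t :=
      ae_restrict_mem measurableSet_Ioo
    filter_upwards [h1, h2, h3] with s hs1 hs2 hs3
    exact ⟨hs1, hs2, hs3⟩
  have hrelay : ∀ s : ℝ, ρ₂ ≤ u s → relayG ρ₁ ρ₂ k (u s) = f s := by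
    intro s hs
    have h1 : max (u s - ρ₂) 0 = u s - ρ₂ := max_eq_left (by linarith)
    have h2 : max (ρ₁ - u s) 0 = 0 := max_eq_right (by linarith)
    simp [relayG, h1, h2, hfdef]
  -- Part 1 : y t ≤ F t
  have part1 : y t ≤ F t := by
    by_contra hcon
    push_neg at hcon
    set S : Set ℝ := {s ∈ Icc a t | y s - F s ≤ 0} with hSdef
    have haS : a ∈ S := ⟨⟨le_rfl, ht.1⟩, by rw [hFa]; linarith⟩
    have hSne : S.Nonempty := ⟨a, haS⟩
    have hSsub : S ⊆ Icc a t := fun x hx => hx.1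
    have hSbdd : BddAbove S := (bddAbove_Icc).mono hSsub
    have hScl : IsClosed S := by
      have hc : ContinuousOn (fun s => y s - F s) (Icc a t) :=
        (hycont.mono hIccsub).sub (hFcont.mono hIccsub')
      exact hc.preimage_isClosed_of_isClosed isClosed_Icc isClosed_Iic
    set s₀ := sSup S with hs₀def
    have hs₀S : s₀ ∈ S := hScl.csSup_mem hSne hSbdd
    have hs₀a : a ≤ s₀ := hs₀S.1.1
    have hs₀t : s₀ ≤ t := hs₀S.1.2
    have hs₀lt : s₀ < t := by
      rcases lt_or_eq_of_le hs₀t with h | h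
      · exact h
      · exfalso; have := hs₀S.2; rw [h] at this; linarith
    have hIoo : ∀ s ∈ Ioo s₀ t, F s < y s := by
      intro s hs
      by_contra h
      push_neg at h
      have : s ∈ S := ⟨⟨le_trans hs₀a hs.1.le, hs.2.le⟩, by linarith⟩
      exact absurd (le_csSup hSbdd this) (not_le.2 hs.1)
    have h_ae : y' ≤ᵐ[volume.restrict (Icc s₀ t)] f := by
      filter_upwards [hae_all s₀ hs₀a hs₀t] with s hs
      obtain ⟨hus, hVIs, hsm⟩ := hs
      have hFy : F s < y s := hIoo s hsm
      have hFge : y a ≤ F s := by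
        have := hFmono a s le_rfl (le_trans hs₀a hsm.1.le) (le_trans hsm.2.le ht.2)
        rwa [hFa] at this
      have hygt : -1 < y s := by linarith
      have hq := hVIs (-1) ⟨le_rfl, by norm_num⟩
      rw [hrelay s hus] at hq
      nlinarith
    have hIy' := hII y' hy'int s₀ t (le_trans ha hs₀a) hs₀t htT
    have hIf := hII f hfint s₀ t (le_trans ha hs₀a) hs₀t htT
    have hint := intervalIntegral.integral_mono_ae_restrict hs₀t hIy' hIf h_ae
    have e1 := hyFTC s₀ t (le_trans ha hs₀a) hs₀t htT
    have e2 := hFd s₀ t hs₀a hs₀t ht.2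
    have := hs₀S.2
    linarith
  -- Part 2 : min 1 (F t) ≤ y t
  have part2 : min 1 (F t) ≤ y t := by
    by_contra hcon
    push_neg at hcon
    set S : Set ℝ := {s ∈ Icc a t | min 1 (F s) - y s ≤ 0} with hSdef
    have haS : a ∈ S := ⟨⟨le_rfl, ht.1⟩, by
      rw [hFa]
      have := min_le_right (1:ℝ) (y a)
      linarith⟩
    have hSne : S.Nonempty := ⟨a, haS⟩
    have hSsub : S ⊆ Icc a t := fun x hx => hx.1
    have hSbdd : BddAbove S := (bddAbove_Icc).mono hSsub
    have hScl : IsClosed S := by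
      have hc : ContinuousOn (fun s => min 1 (F s) - y s) (Icc a t) :=
        ((continuousOn_const.inf (hFcont.mono hIccsub')).sub (hycont.mono hIccsub))
      exact hc.preimage_isClosed_of_isClosed isClosed_Icc isClosed_Iic
    set s₀ := sSup S with hs₀def
    have hs₀S : s₀ ∈ S := hScl.csSup_mem hSne hSbdd
    have hs₀a : a ≤ s₀ := hs₀S.1.1
    have hs₀t : s₀ ≤ t := hs₀S.1.2
    have hs₀lt : s₀ < t := by
      rcases lt_or_eq_of_le hs₀t with h | h
      · exact h
      · exfalso; have := hs₀S.2; rw [h] at this; linarith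
    have hIoo : ∀ s ∈ Ioo s₀ t, y s < min 1 (F s) := by
      intro s hs
      by_contra h
      push_neg at h
      have : s ∈ S := ⟨⟨le_trans hs₀a hs.1.le, hs.2.le⟩, by linarith⟩
      exact absurd (le_csSup hSbdd this) (not_le.2 hs.1)
    have h_ae : f ≤ᵐ[volume.restrict (Icc s₀ t)] y' := by
      filter_upwards [hae_all s₀ hs₀a hs₀t] with s hs
      obtain ⟨hus, hVIs, hsm⟩ := hs
      have hylt : y s < 1 := lt_of_lt_of_le (hIoo s hsm) (min_le_left _ _)
      have hq := hVIs 1 ⟨by norm_num, le_rfl⟩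
      rw [hrelay s hus] at hq
      nlinarith
    have hIy' := hII y' hy'int s₀ t (le_trans ha hs₀a) hs₀t htT
    have hIf := hII f hfint s₀ t (le_trans ha hs₀a) hs₀t htT
    have hint := intervalIntegral.integral_mono_ae_restrict hs₀t hIf hIy' h_ae
    have e1 := hyFTC s₀ t (le_trans ha hs₀a) hs₀t htT
    have e2 := hFd s₀ t hs₀a hs₀t ht.2
    have hFm : F s₀ ≤ F t := hFmono s₀ t hs₀a hs₀t ht.2
    have hmin : min 1 (F t) - min 1 (F s₀) ≤ F t - F s₀ := by
      rcases le_total 1 (F s₀) with h | h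
      · rw [min_eq_left h]
        have : min 1 (F t) ≤ 1 := min_le_left _ _
        linarith
      · rw [min_eq_right h]
        have : min 1 (F t) ≤ F t := min_le_right _ _
        linarith
    have := hs₀S.2
    linarith
  exact le_antisymm (le_min hyt1 part1) part2
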